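/- Let p > 3 be prime. If r is an integer with r ≡ 2 (mod p-1) and t = v_p(r-2) is the p-adic valuation of r-2, then for all i ≥ 3, p^i · C(r,i) ≡ 0 (mod p^{t+3}). -/

import Mathlib

private lemma aux_lt_pow5 : ∀ k : ℕ, k + 3 < 5 ^ (k + 1) := by
  intro k
  induction k with
  | zero => norm_num
  | succ n ih =>
    have : 5 ^ (n + 1 + 1) = 5 * 5 ^ (n + 1) := by ring
    omega

theorem stmt_4 (p r : ℕ) (hp : p.Prime) (hp3 : 3 < p) (hr : 2 < r)
    (hr2 : r ≡ 2 [MOD p - 1]) (t : ℕ) (ht : t = padicValNat p (r - 2)) :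
    ∀ i : ℕ, 3 ≤ i → (p : ℤ)^(t + 3) ∣ (p : ℤ)^i * (r.choose i : ℤ) := by
  intro i hi
  suffices h : p ^ (t + 3) ∣ p ^ i * r.choose i by exact_mod_cast h
  rcases lt_or_ge r i with hri | hir
  · simp [Nat.choose_eq_zero_of_lt hri]
  rcases le_or_gt (t + 3) i with hti | hti
  · exact Dvd.dvd.mul_right (pow_dvd_pow p hti) _
  have hpne : p ≠ 0 := hp.pos.ne'
  have ha : r.choose i ≠ 0 := (Nat.choose_pos hir).ne'
  have hb : i.choose 3 ≠ 0 := (Nat.choose_pos hi).ne'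
  have hc : r.choose 3 ≠ 0 := (Nat.choose_pos (le_trans hi hir)).ne'
  have hd : (r - 3).choose (i - 3) ≠ 0 :=
    (Nat.choose_pos (Nat.sub_le_sub_right hir 3)).ne'
  have hid : Nat.choose r i * Nat.choose i 3 = Nat.choose r 3 * Nat.choose (r - 3) (i - 3) :=
    Nat.choose_mul hi
  -- p^t ∣ choose r 3
  have htdvd : p ^ t ∣ r.choose 3 := by
    have h1 : p ^ t ∣ r - 2 := ht ▸ pow_padicValNat_dvd
    have h2 : (r - 2) ∣ r.descFactorial 3 := by
      have hdf : r.descFactorial 3 = r * ((r - 1) * (r - 2)) := by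
        simp [Nat.descFactorial]
        ring
      rw [hdf]
      exact Dvd.dvd.mul_left (Dvd.dvd.mul_left dvd_rfl _) _
    have h3 : p ^ t ∣ 6 * r.choose 3 := by
      have hdc : r.descFactorial 3 = 6 * r.choose 3 := by
        rw [Nat.descFactorial_eq_factorial_mul_choose]
        norm_num [Nat.factorial]
      exact hdc ▸ h1.trans h2
    have hcop : Nat.Coprime (p ^ t) 6 := by
      apply Nat.Coprime.pow_left
      refine hp.coprime_iff_not_dvd.mpr ?_
      intro hdvd
      have hle : p ≤ 6 := Nat.le_of_dvd (by norm_num) hdvd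
      interval_cases p <;> first | omega | exact absurd hp (by norm_num)
    exact hcop.dvd_of_dvd_mul_left h3
  -- factorization bounds
  have fct : t ≤ (r.choose 3).factorization p :=
    (Nat.Prime.pow_dvd_iff_le_factorization hp hc).mp htdvd
  have fbi : (i.choose 3).factorization p ≤ i - 3 := by
    have hlog : (i.choose 3).factorization p ≤ Nat.log p i :=
      Nat.factorization_choose_le_log
    have hipow : i < p ^ (i - 2) := by
      calc i < 5 ^ (i - 2) := by
              have := aux_lt_pow5 (i - 3)
              have h32 : i - 3 + 1 = i - 2 := by omega
              have h33 : i - 3 + 3 = i := by omega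
              rw [h32, h33] at this
              exact this
        _ ≤ p ^ (i - 2) := by
              have hp5 : 5 ≤ p := by
                by_contra h
                push_neg at h
                interval_cases p
                exact absurd hp (by norm_num)
              exact Nat.pow_le_pow_left hp5 _
    have : Nat.log p i < i - 2 :=
      (Nat.log_lt_iff_lt_pow (by omega) (by omega)).mpr hipow
    omega
  -- combine via the identity
  have hsum : (r.choose i).factorization p + (i.choose 3).factorization p
      = (r.choose 3).factorization p + ((r - 3).choose (i - 3)).factorization p := by
    have := congrArg (fun n => n.factorization p) hid
    simpa [Nat.factorization_mul ha hb, Nat.factorization_mul hc hd] using this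
  have hfa : t ≤ (r.choose i).factorization p + (i - 3) := by omega
  refine (Nat.Prime.pow_dvd_iff_le_factorization hp (by positivity)).mpr ?_
  rw [Nat.factorization_mul (pow_ne_zero i hpne) ha]
  simp [hp.factorization_pow]
  omega
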